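/- arXiv:1901.04100 — 3 statements merged into one kernel-verified Lean document; each statement's English description precedes it below -/
import Mathlib

section
/- Let γ and λ be positive integers with γ < λ. Let M be uniformly distributed on {0,1,...,2^γ − 1} and R be uniformly distributed on {0,1,...,2^λ − 1}, with M and R independent, and let the ciphertext be C = M + R (integer addition). Then for every function A : ℕ → ℕ (an adversary guessing the plaintext from the ciphertext), Pr[A(M + R) = M] − 1/2^γ ≤ 1/2^(λ−γ−1). -/
/-- LEP-CNN Theorem 1 (security of one-time additive masking):
`M` uniform on `{0,…,2^γ−1}`, `R` uniform on `{0,…,2^λ−1}` independent,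
ciphertext `C = M + R` (integer addition).  For any adversary
`A : ℕ → ℕ`, `Pr[A(M+R) = M] − 1/2^γ ≤ 1/2^(λ−γ−1)`.
The probability is taken over the uniform distribution on the pair `(M, R)`. -/
theorem lepcnn_security (γ lam : ℕ) (hγ : 0 < γ) (hlam : 0 < lam) (hγlam : γ < lam)
    (A : ℕ → ℕ) :
    ((Finset.univ.filter
        (fun p : Fin (2 ^ γ) × Fin (2 ^ lam) =>
          A ((p.1 : ℕ) + (p.2 : ℕ)) = (p.1 : ℕ))).card : ℝ) /
        ((2 : ℝ) ^ γ * 2 ^ lam) - 1 / 2 ^ γ ≤ 1 / 2 ^ (lam - γ - 1) := by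
  set S := Finset.univ.filter
      (fun p : Fin (2 ^ γ) × Fin (2 ^ lam) =>
        A ((p.1 : ℕ) + (p.2 : ℕ)) = (p.1 : ℕ)) with hS
  have hcard : S.card ≤ 2 ^ γ + 2 ^ lam := by
    have := Finset.card_le_card_of_injOn
      (f := fun p : Fin (2 ^ γ) × Fin (2 ^ lam) => (p.1 : ℕ) + (p.2 : ℕ))
      (s := S) (t := Finset.range (2 ^ γ + 2 ^ lam))
      (by
        intro p hp
        simp only [Finset.mem_coe, Finset.mem_range]
        have h1 := p.1.isLt
        have h2 := p.2.isLt
        omega)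
      (by
        intro p hp q hq hpq
        simp only [hS, Finset.mem_coe, Finset.mem_filter] at hp hq
        simp only at hpq
        have h1 : (p.1 : ℕ) = (q.1 : ℕ) := by rw [← hp.2, ← hq.2, hpq]
        have h2 : (p.2 : ℕ) = (q.2 : ℕ) := by omega
        exact Prod.ext (Fin.ext h1) (Fin.ext h2))
    simpa using this
  have ha : (0 : ℝ) < 2 ^ γ := by positivity
  have hb : (0 : ℝ) < 2 ^ lam := by positivity
  have hcardR : (S.card : ℝ) ≤ 2 ^ γ + 2 ^ lam := by
    exact_mod_cast hcard
  have key : ((2:ℝ)^γ + 2^lam)/((2:ℝ)^γ*2^lam) = 1/2^lam + 1/2^γ := by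
    field_simp
  have step1 : (S.card : ℝ) / ((2 : ℝ) ^ γ * 2 ^ lam) - 1 / 2 ^ γ ≤ 1 / 2 ^ lam := by
    have h1 : (S.card:ℝ)/((2:ℝ)^γ*2^lam) ≤ ((2:ℝ)^γ+2^lam)/((2:ℝ)^γ*2^lam) := by
      gcongr
    rw [key] at h1
    linarith
  have step2 : (1 : ℝ) / 2 ^ lam ≤ 1 / 2 ^ (lam - γ - 1) := by
    apply one_div_le_one_div_of_le (by positivity)
    exact pow_le_pow_right₀ (by norm_num) (by omega)
  linarith
end

section
/- Let γ and λ be positive integers with γ < λ. Let M be uniformly distributed on {0,1,...,2^γ − 1} and R be uniformly distributed on {0,1,...,2^λ − 1}, with M and R independent. Then for every function A : ℕ → ℕ, Pr[A(M + R) = M] ≤ 1/2^γ + (1 − 1/2^γ) · (1/2^(λ−γ−1)). -/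
/-- Intermediate bound in the LEP-CNN security analysis:
`M` uniform on `{0,…,2^γ−1}`, `R` uniform on `{0,…,2^lam−1}` independent.
For any adversary `A : ℕ → ℕ`,
`Pr[A(M+R) = M] ≤ 1/2^γ + (1 − 1/2^γ)·(1/2^(λ−γ−1))`. -/
theorem lepcnn_guess_bound (γ lam : ℕ) (hγ : 0 < γ) (hlam : 0 < lam) (hγlam : γ < lam)
    (A : ℕ → ℕ) :
    ((Finset.univ.filter
        (fun p : Fin (2 ^ γ) × Fin (2 ^ lam) =>
          A ((p.1 : ℕ) + (p.2 : ℕ)) = (p.1 : ℕ))).card : ℝ) /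
        ((2 : ℝ) ^ γ * 2 ^ lam) ≤
      1 / 2 ^ γ + (1 - 1 / 2 ^ γ) * (1 / 2 ^ (lam - γ - 1)) := by
  have hcard : (Finset.univ.filter
      (fun p : Fin (2 ^ γ) × Fin (2 ^ lam) =>
        A ((p.1 : ℕ) + (p.2 : ℕ)) = (p.1 : ℕ))).card ≤ 2 ^ γ + 2 ^ lam := by
    set S := Finset.univ.filter
      (fun p : Fin (2 ^ γ) × Fin (2 ^ lam) =>
        A ((p.1 : ℕ) + (p.2 : ℕ)) = (p.1 : ℕ)) with hS
    have hmaps : ∀ p ∈ S, ((p.1 : ℕ) + (p.2 : ℕ)) ∈ Finset.range (2 ^ γ + 2 ^ lam) := by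
      intro p hp
      simp only [Finset.mem_range]
      have h1 := p.1.isLt
      have h2 := p.2.isLt
      omega
    have hinj : Set.InjOn (fun p : Fin (2 ^ γ) × Fin (2 ^ lam) => (p.1 : ℕ) + (p.2 : ℕ))
        (S : Set (Fin (2 ^ γ) × Fin (2 ^ lam))) := by
      intro p hp q hq hpq
      simp only [hS, Finset.coe_filter, Finset.mem_univ, true_and, Set.mem_setOf_eq] at hp hq
      simp only at hpq
      have hm : (p.1 : ℕ) = (q.1 : ℕ) := by rw [← hp, ← hq, hpq]
      have hr : (p.2 : ℕ) = (q.2 : ℕ) := by omega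
      exact Prod.ext (Fin.ext hm) (Fin.ext hr)
    have h := Finset.card_le_card_of_injOn _ hmaps hinj
    simpa using h
  obtain ⟨k, hk⟩ : ∃ k, lam = γ + 1 + k := ⟨lam - γ - 1, by omega⟩
  subst hk
  have hexp : γ + 1 + k - γ - 1 = k := by omega
  rw [hexp]
  have hc : ((Finset.univ.filter
      (fun p : Fin (2 ^ γ) × Fin (2 ^ (γ + 1 + k)) =>
        A ((p.1 : ℕ) + (p.2 : ℕ)) = (p.1 : ℕ))).card : ℝ)
      ≤ (2 : ℝ) ^ γ + 2 ^ (γ + 1 + k) := by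
    calc ((Finset.univ.filter _).card : ℝ) ≤ ((2 ^ γ + 2 ^ (γ + 1 + k) : ℕ) : ℝ) := by
          exact_mod_cast hcard
      _ = (2 : ℝ) ^ γ + 2 ^ (γ + 1 + k) := by push_cast; ring
  have ha : (2 : ℝ) ≤ 2 ^ γ := by
    calc (2 : ℝ) = 2 ^ 1 := by norm_num
      _ ≤ 2 ^ γ := by exact pow_le_pow_right₀ (by norm_num) hγ
  have hb : (1 : ℝ) ≤ 2 ^ k := one_le_pow₀ (by norm_num)
  have ha0 : (0 : ℝ) < 2 ^ γ := by positivity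
  have hb0 : (0 : ℝ) < 2 ^ k := by positivity
  have hsplit : (2 : ℝ) ^ (γ + 1 + k) = 2 ^ γ * 2 * 2 ^ k := by
    rw [pow_add, pow_add]; ring
  rw [div_le_iff₀ (by positivity)]
  rw [hsplit] at hc ⊢
  have hgoal : (2 : ℝ) ^ γ + 2 ^ γ * 2 * 2 ^ k ≤
      (1 / 2 ^ γ + (1 - 1 / 2 ^ γ) * (1 / 2 ^ k)) * (2 ^ γ * (2 ^ γ * 2 * 2 ^ k)) := by
    have h1 : (1 / (2:ℝ) ^ γ + (1 - 1 / 2 ^ γ) * (1 / 2 ^ k)) * (2 ^ γ * (2 ^ γ * 2 * 2 ^ k))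
        = 2 ^ γ * 2 * 2 ^ k + (2 ^ γ - 1) * (2 ^ γ * 2) := by
      field_simp
    rw [h1]
    nlinarith
  linarith
end

section
/- Let γ and λ be positive integers with γ < λ. Let M be uniformly distributed on {0,1,...,2^γ − 1} and R be uniformly distributed on {0,1,...,2^λ − 1}, with M and R independent, and let C = M + R. Then for every integer c with 2^γ − 1 ≤ c ≤ 2^λ − 1 and every m ∈ {0,1,...,2^γ − 1}, the conditional probability Pr[M = m | M + R = c] = 1/2^γ. In particular, conditioned on such an in-range ciphertext value, M remains uniformly distributed on {0,1,...,2^γ − 1}. -/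
/-- Conditional uniformity of the plaintext given an in-range ciphertext:
for any ciphertext value `c` with `2^γ − 1 ≤ c ≤ 2^λ − 1` and any plaintext
`m < 2^γ`, `Pr[M = m ∣ M + R = c] = 1/2^γ`, where `M` is uniform on
`{0,…,2^γ−1}` and `R` is uniform on `{0,…,2^λ−1}`, independent.
The conditional probability is expressed as the ratio of the number of pairs
realizing both events to the number of pairs realizing the conditioning event. -/
theorem lepcnn_conditional_uniform (γ lam : ℕ) (hγ : 0 < γ) (hlam : 0 < lam)
    (hγlam : γ < lam) (c m : ℕ) (hc₁ : 2 ^ γ - 1 ≤ c) (hc₂ : c ≤ 2 ^ lam - 1)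
    (hm : m < 2 ^ γ) :
    ((Finset.univ.filter
        (fun p : Fin (2 ^ γ) × Fin (2 ^ lam) =>
          (p.1 : ℕ) = m ∧ (p.1 : ℕ) + (p.2 : ℕ) = c)).card : ℝ) /
      ((Finset.univ.filter
        (fun p : Fin (2 ^ γ) × Fin (2 ^ lam) =>
          (p.1 : ℕ) + (p.2 : ℕ) = c)).card : ℝ) = 1 / 2 ^ γ := by
  have hle : ∀ m' : ℕ, m' < 2 ^ γ → m' ≤ c := by
    intro m' h
    exact le_trans (Nat.le_sub_one_of_lt h) hc₁
  have hcr : ∀ m' : ℕ, m' < 2 ^ γ → c - m' < 2 ^ lam := by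
    intro m' h
    have : c < 2 ^ lam := lt_of_le_of_lt hc₂ (Nat.sub_lt (Nat.pow_pos (by norm_num)) one_pos)
    exact lt_of_le_of_lt (Nat.sub_le _ _) this
  have hnum : (Finset.univ.filter
        (fun p : Fin (2 ^ γ) × Fin (2 ^ lam) =>
          (p.1 : ℕ) = m ∧ (p.1 : ℕ) + (p.2 : ℕ) = c)).card = 1 := by
    rw [Finset.card_eq_one]
    refine ⟨(⟨m, hm⟩, ⟨c - m, hcr m hm⟩), ?_⟩
    ext p
    simp only [Finset.mem_filter, Finset.mem_univ, true_and, Finset.mem_singleton]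
    constructor
    · rintro ⟨h1, h2⟩
      have : (p.2 : ℕ) = c - m := by omega
      rcases p with ⟨a, b⟩
      simp only [Prod.mk.injEq]
      exact ⟨Fin.ext h1, Fin.ext this⟩
    · rintro rfl
      exact ⟨rfl, Nat.add_sub_cancel' (hle m hm)⟩
  have hden : (Finset.univ.filter
        (fun p : Fin (2 ^ γ) × Fin (2 ^ lam) =>
          (p.1 : ℕ) + (p.2 : ℕ) = c)).card = 2 ^ γ := by
    have h2 : (Finset.univ.filter
        (fun p : Fin (2 ^ γ) × Fin (2 ^ lam) =>
          (p.1 : ℕ) + (p.2 : ℕ) = c)).card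
        = (Finset.univ : Finset (Fin (2 ^ γ))).card := by
      apply Finset.card_bij (fun p _ => p.1)
      · intro p _; exact Finset.mem_univ _
      · rintro ⟨a, b⟩ ha ⟨a', b'⟩ hb h
        simp only [Finset.mem_filter] at ha hb
        simp only at h
        have hab : (a : ℕ) = (a' : ℕ) := congrArg Fin.val h
        have : (b : ℕ) = (b' : ℕ) := by omega
        exact Prod.ext h (Fin.ext this)
      · intro a _
        refine ⟨(a, ⟨c - a, hcr a a.isLt⟩), ?_, rfl⟩
        simp only [Finset.mem_filter, Finset.mem_univ, true_and]
        exact Nat.add_sub_cancel' (hle a a.isLt)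
    rw [h2, Finset.card_univ, Fintype.card_fin]
  rw [hnum, hden]
  simp
end
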